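/- For every n ≥ 1 and all x, x′ ∈ X, the normalized filtering distributions started from the two initial points satisfy ‖φₙˣ − φₙˣ′‖_TV ≤ ρⁿ, where ρ = 1 − σ₋/σ₊. (This is Corollary 1 in explicit finite-dimensional form: the conditional law of the hidden state Xₙ given observations and the initial state forgets the initial state geometrically, with a deterministic rate not depending on the observation functions g₁, …, gₙ.) -/

import Mathlib

open MeasureTheory

/-- `Nseq μ q g x n = ∫_{Xⁿ} ∏_{k=1}ⁿ q(x_{k−1}, x_k) g_k(x_k) μ(dx₁)⋯μ(dxₙ)`,
with `x₀ := x` (for `n = 0` this is `1`, the empty product integrated against a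
probability measure). Here the coordinate `xs k` of `xs : Fin n → X` plays the
role of `x_{k+1}`, and `g (k+1)` the role of `g_{k+1}`. -/
noncomputable def Nseq {X : Type*} [MeasurableSpace X] (μ : Measure X)
    (q : X → X → ℝ) (g : ℕ → X → ℝ) (x : X) (n : ℕ) : ℝ :=
  ∫ xs : Fin n → X,
    ∏ k : Fin n, q (if (k : ℕ) = 0 then x else xs ⟨(k : ℕ) - 1, Nat.lt_of_le_of_lt (Nat.sub_le _ _) k.isLt⟩) (xs k) * g ((k : ℕ) + 1) (xs k)
    ∂(Measure.pi fun _ => μ)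

/-- `phiSet μ q g x n A = φ_{n+1}ˣ(A)`, the normalized filtering distribution of
the hidden state `x_{n+1}` given the observation functions `g₁, …, g_{n+1}` and
the initial state `x₀ = x`. -/
noncomputable def phiSet {X : Type*} [MeasurableSpace X] (μ : Measure X)
    (q : X → X → ℝ) (g : ℕ → X → ℝ) (x : X) (n : ℕ) (A : Set X) : ℝ :=
  (∫ xs : Fin (n + 1) → X,
      Set.indicator A (fun _ => (1 : ℝ)) (xs (Fin.last n)) *
        ∏ k : Fin (n + 1),
          q (if (k : ℕ) = 0 then x else xs ⟨(k : ℕ) - 1, Nat.lt_of_le_of_lt (Nat.sub_le _ _) k.isLt⟩) (xs k) * g ((k : ℕ) + 1) (xs k)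
      ∂(Measure.pi fun _ => μ)) / Nseq μ q g x (n + 1)

set_option linter.unusedSectionVars false
set_option linter.unusedVariables false
set_option maxHeartbeats 1000000


noncomputable def prodFn {X : Type*} (q : X → X → ℝ) (g : ℕ → X → ℝ) (x : X) (n : ℕ)
    (xs : Fin n → X) : ℝ :=
  ∏ k : Fin n, q (if (k : ℕ) = 0 then x else xs ⟨(k : ℕ) - 1, Nat.lt_of_le_of_lt (Nat.sub_le _ _) k.isLt⟩) (xs k) * g ((k : ℕ) + 1) (xs k)

noncomputable def Nseq' {X : Type*} [MeasurableSpace X] (μ : Measure X)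
    (q : X → X → ℝ) (g : ℕ → X → ℝ) (x : X) (n : ℕ) : ℝ :=
  ∫ xs : Fin n → X, prodFn q g x n xs ∂(Measure.pi fun _ => μ)

noncomputable def Numer {X : Type*} [MeasurableSpace X] (μ : Measure X)
    (q : X → X → ℝ) (g : ℕ → X → ℝ) (x : X) (n : ℕ) (A : Set X) : ℝ :=
  ∫ xs : Fin (n + 1) → X,
      Set.indicator A (fun _ => (1 : ℝ)) (xs (Fin.last n)) * prodFn q g x (n+1) xs
      ∂(Measure.pi fun _ => μ)

section Aux

variable {X : Type*} [MeasurableSpace X] {μ : Measure X} [IsProbabilityMeasure μ]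
  {σm σp : ℝ} {q : X → X → ℝ} {g : ℕ → X → ℝ}

lemma measurable_prodFn_param (hq : Measurable (Function.uncurry q))
    (hgm : ∀ k, 1 ≤ k → Measurable (g k)) (n : ℕ) :
    Measurable (fun p : X × (Fin n → X) => prodFn q g p.1 n p.2) := by
  apply Finset.measurable_prod
  intro k _
  apply Measurable.mul
  · have : (fun p : X × (Fin n → X) => q (if (k : ℕ) = 0 then p.1 else p.2 ⟨(k : ℕ) - 1, Nat.lt_of_le_of_lt (Nat.sub_le _ _) k.isLt⟩) (p.2 k))
        = Function.uncurry q ∘ (fun p : X × (Fin n → X) =>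
          ((if (k : ℕ) = 0 then p.1 else p.2 ⟨(k : ℕ) - 1, Nat.lt_of_le_of_lt (Nat.sub_le _ _) k.isLt⟩), p.2 k)) := rfl
    rw [this]
    apply hq.comp
    apply Measurable.prodMk
    · split_ifs
      · exact measurable_fst
      · exact (measurable_pi_apply _).comp measurable_snd
    · exact (measurable_pi_apply _).comp measurable_snd
  · exact (hgm _ (by omega)).comp ((measurable_pi_apply _).comp measurable_snd)

lemma measurable_prodFn (hq : Measurable (Function.uncurry q))
    (hgm : ∀ k, 1 ≤ k → Measurable (g k)) (x : X) (n : ℕ) :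
    Measurable (prodFn q g x n) :=
  (measurable_prodFn_param hq hgm n).comp (measurable_const.prodMk measurable_id)

lemma prodFn_nonneg (hσm : 0 < σm) (hql : ∀ x x', σm ≤ q x x')
    (hg0 : ∀ k, 1 ≤ k → ∀ x, 0 ≤ g k x) (x : X) (n : ℕ) (xs : Fin n → X) :
    0 ≤ prodFn q g x n xs :=
  Finset.prod_nonneg fun k _ => mul_nonneg (le_trans hσm.le (hql _ _)) (hg0 _ (by omega) _)

lemma prodFn_le (hσm : 0 < σm) (hql : ∀ x x', σm ≤ q x x') (hqu : ∀ x x', q x x' ≤ σp)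
    (hg0 : ∀ k, 1 ≤ k → ∀ x, 0 ≤ g k x) (x : X) (n : ℕ) (xs : Fin n → X) :
    prodFn q g x n xs ≤ ∏ k : Fin n, σp * g ((k : ℕ) + 1) (xs k) := by
  apply Finset.prod_le_prod
  · intro k _
    exact mul_nonneg (le_trans hσm.le (hql _ _)) (hg0 _ (by omega) _)
  · intro k _
    exact mul_le_mul_of_nonneg_right (hqu _ _) (hg0 _ (by omega) _)

lemma prodFn_ge (hσm : 0 < σm) (hql : ∀ x x', σm ≤ q x x')
    (hg0 : ∀ k, 1 ≤ k → ∀ x, 0 ≤ g k x) (x : X) (n : ℕ) (xs : Fin n → X) :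
    (∏ k : Fin n, σm * g ((k : ℕ) + 1) (xs k)) ≤ prodFn q g x n xs := by
  apply Finset.prod_le_prod
  · intro k _
    exact mul_nonneg hσm.le (hg0 _ (by omega) _)
  · intro k _
    exact mul_le_mul_of_nonneg_right (hql _ _) (hg0 _ (by omega) _)

end Aux
section Aux2

variable {X : Type*} [MeasurableSpace X] {μ : Measure X} [IsProbabilityMeasure μ]
  {σm σp : ℝ} {q : X → X → ℝ} {g : ℕ → X → ℝ}

lemma integrable_prod_bound (c : ℝ) (hgm : ∀ k, 1 ≤ k → Measurable (g k))
    (hgi : ∀ k, 1 ≤ k → Integrable (g k) μ) (n : ℕ) :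
    Integrable (fun xs : Fin n → X => ∏ k : Fin n, c * g ((k : ℕ) + 1) (xs k))
      (Measure.pi fun _ => μ) := by
  letI : MeasureSpace X := ⟨μ⟩
  have : SigmaFinite (volume : Measure X) := inferInstance
  exact Integrable.fin_nat_prod (f := fun k : Fin n => fun y => c * g ((k : ℕ) + 1) y)
    (fun k => ((hgi _ (by omega)).const_mul c))

lemma integral_prod_bound (c : ℝ) (hgi : ∀ k, 1 ≤ k → Integrable (g k) μ) (n : ℕ) :
    ∫ xs : Fin n → X, ∏ k : Fin n, c * g ((k : ℕ) + 1) (xs k) ∂(Measure.pi fun _ => μ)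
      = ∏ k : Fin n, (c * ∫ y, g ((k : ℕ) + 1) y ∂μ) := by
  letI : MeasureSpace X := ⟨μ⟩
  rw [show (Measure.pi fun _ : Fin n => μ) = volume from rfl]
  rw [← show (Measure.pi fun _ : Fin n => μ) = volume from rfl, MeasureTheory.integral_fintype_prod_eq_prod (f := fun k : Fin n => fun y => c * g ((k : ℕ) + 1) y)]
  simp only [MeasureTheory.integral_const_mul]

lemma integrable_prodFn (hσm : 0 < σm) (hq : Measurable (Function.uncurry q))
    (hql : ∀ x x', σm ≤ q x x') (hqu : ∀ x x', q x x' ≤ σp)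
    (hgm : ∀ k, 1 ≤ k → Measurable (g k)) (hg0 : ∀ k, 1 ≤ k → ∀ x, 0 ≤ g k x)
    (hgi : ∀ k, 1 ≤ k → Integrable (g k) μ) (x : X) (n : ℕ) :
    Integrable (prodFn q g x n) (Measure.pi fun _ => μ) := by
  apply Integrable.mono' (integrable_prod_bound σp hgm hgi n)
    ((measurable_prodFn hq hgm x n).aestronglyMeasurable)
  filter_upwards with xs
  rw [Real.norm_eq_abs, abs_of_nonneg (prodFn_nonneg hσm hql hg0 x n xs)]
  exact prodFn_le hσm hql hqu hg0 x n xs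

lemma integrable_ind_mul_prodFn (hσm : 0 < σm) (hq : Measurable (Function.uncurry q))
    (hql : ∀ x x', σm ≤ q x x') (hqu : ∀ x x', q x x' ≤ σp)
    (hgm : ∀ k, 1 ≤ k → Measurable (g k)) (hg0 : ∀ k, 1 ≤ k → ∀ x, 0 ≤ g k x)
    (hgi : ∀ k, 1 ≤ k → Integrable (g k) μ) (x : X) (n : ℕ) (A : Set X) (hA : MeasurableSet A) :
    Integrable (fun xs : Fin (n+1) → X =>
      Set.indicator A (fun _ => (1:ℝ)) (xs (Fin.last n)) * prodFn q g x (n+1) xs)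
      (Measure.pi fun _ => μ) := by
  apply Integrable.mono' (integrable_prod_bound σp hgm hgi (n+1))
  · exact (((measurable_const.indicator hA).comp (measurable_pi_apply _)).mul
      (measurable_prodFn hq hgm x (n+1))).aestronglyMeasurable
  filter_upwards with xs
  rw [Real.norm_eq_abs, abs_of_nonneg (mul_nonneg (Set.indicator_nonneg (by simp) _)
    (prodFn_nonneg hσm hql hg0 x (n+1) xs))]
  calc Set.indicator A (fun _ => (1:ℝ)) (xs (Fin.last n)) * prodFn q g x (n+1) xs
      ≤ 1 * prodFn q g x (n+1) xs := by
        apply mul_le_mul_of_nonneg_right _ (prodFn_nonneg hσm hql hg0 x (n+1) xs)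
        exact Set.indicator_le_self' (by simp) _ |>.trans (by simp)
    _ ≤ prodFn q g x (n+1) xs := by rw [one_mul]
    _ ≤ _ := prodFn_le hσm hql hqu hg0 x (n+1) xs

lemma Nseq'_ge (hσm : 0 < σm) (hq : Measurable (Function.uncurry q))
    (hql : ∀ x x', σm ≤ q x x') (hqu : ∀ x x', q x x' ≤ σp)
    (hgm : ∀ k, 1 ≤ k → Measurable (g k)) (hg0 : ∀ k, 1 ≤ k → ∀ x, 0 ≤ g k x)
    (hgi : ∀ k, 1 ≤ k → Integrable (g k) μ) (x : X) (n : ℕ) :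
    (∏ k : Fin n, (σm * ∫ y, g ((k : ℕ) + 1) y ∂μ)) ≤ Nseq' μ q g x n := by
  rw [← integral_prod_bound σm hgi n]
  exact integral_mono (integrable_prod_bound σm hgm hgi n)
    (integrable_prodFn hσm hq hql hqu hgm hg0 hgi x n)
    (fun xs => prodFn_ge hσm hql hg0 x n xs)

lemma Nseq'_le (hσm : 0 < σm) (hq : Measurable (Function.uncurry q))
    (hql : ∀ x x', σm ≤ q x x') (hqu : ∀ x x', q x x' ≤ σp)
    (hgm : ∀ k, 1 ≤ k → Measurable (g k)) (hg0 : ∀ k, 1 ≤ k → ∀ x, 0 ≤ g k x)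
    (hgi : ∀ k, 1 ≤ k → Integrable (g k) μ) (x : X) (n : ℕ) :
    Nseq' μ q g x n ≤ ∏ k : Fin n, (σp * ∫ y, g ((k : ℕ) + 1) y ∂μ) := by
  rw [← integral_prod_bound σp hgi n]
  exact integral_mono (integrable_prodFn hσm hq hql hqu hgm hg0 hgi x n)
    (integrable_prod_bound σp hgm hgi n)
    (fun xs => prodFn_le hσm hql hqu hg0 x n xs)

lemma Nseq'_pos (hσm : 0 < σm) (hq : Measurable (Function.uncurry q))
    (hql : ∀ x x', σm ≤ q x x') (hqu : ∀ x x', q x x' ≤ σp)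
    (hgm : ∀ k, 1 ≤ k → Measurable (g k)) (hg0 : ∀ k, 1 ≤ k → ∀ x, 0 ≤ g k x)
    (hgi : ∀ k, 1 ≤ k → Integrable (g k) μ)
    (hgpos : ∀ k, 1 ≤ k → 0 < ∫ x, g k x ∂μ) (x : X) (n : ℕ) :
    0 < Nseq' μ q g x n := by
  refine lt_of_lt_of_le ?_ (Nseq'_ge hσm hq hql hqu hgm hg0 hgi x n)
  exact Finset.prod_pos fun k _ => mul_pos hσm (hgpos _ (by omega))

lemma Numer_nonneg (hσm : 0 < σm) (hql : ∀ x x', σm ≤ q x x')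
    (hg0 : ∀ k, 1 ≤ k → ∀ x, 0 ≤ g k x) (x : X) (n : ℕ) (A : Set X) :
    0 ≤ Numer μ q g x n A := by
  apply integral_nonneg
  intro xs
  exact mul_nonneg (Set.indicator_nonneg (by simp) _) (prodFn_nonneg hσm hql hg0 x (n+1) xs)

lemma Numer_le_Nseq' (hσm : 0 < σm) (hq : Measurable (Function.uncurry q))
    (hql : ∀ x x', σm ≤ q x x') (hqu : ∀ x x', q x x' ≤ σp)
    (hgm : ∀ k, 1 ≤ k → Measurable (g k)) (hg0 : ∀ k, 1 ≤ k → ∀ x, 0 ≤ g k x)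
    (hgi : ∀ k, 1 ≤ k → Integrable (g k) μ) (x : X) (n : ℕ) (A : Set X) (hA : MeasurableSet A) :
    Numer μ q g x n A ≤ Nseq' μ q g x (n+1) := by
  apply integral_mono (integrable_ind_mul_prodFn hσm hq hql hqu hgm hg0 hgi x n A hA)
    (integrable_prodFn hσm hq hql hqu hgm hg0 hgi x (n+1))
  intro xs
  calc Set.indicator A (fun _ => (1:ℝ)) (xs (Fin.last n)) * prodFn q g x (n+1) xs
      ≤ 1 * prodFn q g x (n+1) xs :=
        mul_le_mul_of_nonneg_right (Set.indicator_le_self' (by simp) _ |>.trans (by simp))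
          (prodFn_nonneg hσm hql hg0 x (n+1) xs)
    _ = _ := one_mul _

end Aux2
section Aux3

variable {X : Type*} [MeasurableSpace X] {μ : Measure X} [IsProbabilityMeasure μ]
  {σm σp : ℝ} {q : X → X → ℝ} {g : ℕ → X → ℝ}

lemma integral_pi_succ {n : ℕ} (Φ : (Fin (n+1) → X) → ℝ)
    (hΦ : Integrable Φ (Measure.pi fun _ => μ)) :
    ∫ xs : Fin (n+1) → X, Φ xs ∂(Measure.pi fun _ => μ)
      = ∫ z, ∫ ys : Fin n → X, Φ (Fin.cons z ys) ∂(Measure.pi fun _ => μ) ∂μ := by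
  have mp := (measurePreserving_piFinSuccAbove (fun _ : Fin (n+1) => μ) 0).symm
  rw [← mp.integral_comp (MeasurableEquiv.measurableEmbedding _)]
  have hint : Integrable (fun p : X × (Fin n → X) =>
      Φ ((MeasurableEquiv.piFinSuccAbove (fun _ : Fin (n+1) => X) 0).symm p))
      (μ.prod (Measure.pi fun _ => μ)) := by
    exact (mp.integrable_comp_emb (MeasurableEquiv.measurableEmbedding _)).mpr hΦ
  rw [MeasureTheory.integral_prod _ hint]
  congr 1
  ext z
  congr 1
  ext ys
  congr 1
  simp [MeasurableEquiv.piFinSuccAbove_symm_apply, Fin.insertNthEquiv, Fin.insertNth_zero']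

lemma cons_nth_eq (z : X) {n : ℕ} (ys : Fin n → X) (k : Fin n) (h : (k : ℕ) < n + 1) :
    (Fin.cons z ys : Fin (n+1) → X) ⟨(k : ℕ), h⟩
      = if (k : ℕ) = 0 then z else ys ⟨(k : ℕ) - 1, Nat.lt_of_le_of_lt (Nat.sub_le _ _) k.isLt⟩ := by
  split_ifs with h0
  · have : (⟨(k : ℕ), h⟩ : Fin (n+1)) = 0 := by ext; simp [h0]
    rw [this, Fin.cons_zero]
  · have : (⟨(k : ℕ), h⟩ : Fin (n+1))
        = Fin.succ ⟨(k : ℕ) - 1, Nat.lt_of_le_of_lt (Nat.sub_le _ _) k.isLt⟩ := by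
      ext; simp; omega
    rw [this, Fin.cons_succ]

lemma prodFn_cons (x z : X) {n : ℕ} (ys : Fin n → X) :
    prodFn q g x (n+1) (Fin.cons z ys)
      = (q x z * g 1 z) * prodFn q (fun k => g (k+1)) z n ys := by
  unfold prodFn
  rw [Fin.prod_univ_succ]
  refine congrArg₂ (· * ·) (by simp) (Finset.prod_congr rfl fun k _ => ?_)
  simp only [Fin.cons_succ, Fin.val_succ, if_neg (Nat.succ_ne_zero (k : ℕ)),
    Nat.add_sub_cancel]
  rw [cons_nth_eq]

lemma Nseq'_zero (x : X) : Nseq' μ q g x 0 = 1 := by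
  unfold Nseq' prodFn
  simp

lemma Nseq'_succ (hσm : 0 < σm) (hq : Measurable (Function.uncurry q))
    (hql : ∀ x x', σm ≤ q x x') (hqu : ∀ x x', q x x' ≤ σp)
    (hgm : ∀ k, 1 ≤ k → Measurable (g k)) (hg0 : ∀ k, 1 ≤ k → ∀ x, 0 ≤ g k x)
    (hgi : ∀ k, 1 ≤ k → Integrable (g k) μ) (x : X) (n : ℕ) :
    Nseq' μ q g x (n+1) = ∫ z, q x z * g 1 z * Nseq' μ q (fun k => g (k+1)) z n ∂μ := by
  unfold Nseq'
  rw [integral_pi_succ _ (integrable_prodFn hσm hq hql hqu hgm hg0 hgi x (n+1))]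
  congr 1
  ext z
  rw [← integral_const_mul]
  congr 1
  ext ys
  rw [prodFn_cons]

lemma Numer_succ (hσm : 0 < σm) (hq : Measurable (Function.uncurry q))
    (hql : ∀ x x', σm ≤ q x x') (hqu : ∀ x x', q x x' ≤ σp)
    (hgm : ∀ k, 1 ≤ k → Measurable (g k)) (hg0 : ∀ k, 1 ≤ k → ∀ x, 0 ≤ g k x)
    (hgi : ∀ k, 1 ≤ k → Integrable (g k) μ) (x : X) (n : ℕ) (A : Set X) (hA : MeasurableSet A) :
    Numer μ q g x (n+1) A
      = ∫ z, q x z * g 1 z * Numer μ q (fun k => g (k+1)) z n A ∂μ := by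
  unfold Numer
  rw [integral_pi_succ _ (integrable_ind_mul_prodFn hσm hq hql hqu hgm hg0 hgi x (n+1) A hA)]
  congr 1
  ext z
  rw [← integral_const_mul]
  congr 1
  ext ys
  rw [show (Fin.cons z ys : Fin (n+2) → X) (Fin.last (n+1)) = ys (Fin.last n) by
    rw [← Fin.succ_last, Fin.cons_succ]]
  rw [prodFn_cons]
  ring

lemma Numer_zero_eq (hσm : 0 < σm) (hq : Measurable (Function.uncurry q))
    (hql : ∀ x x', σm ≤ q x x') (hqu : ∀ x x', q x x' ≤ σp)
    (hgm : ∀ k, 1 ≤ k → Measurable (g k)) (hg0 : ∀ k, 1 ≤ k → ∀ x, 0 ≤ g k x)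
    (hgi : ∀ k, 1 ≤ k → Integrable (g k) μ) (x : X) (A : Set X) (hA : MeasurableSet A) :
    Numer μ q g x 0 A
      = ∫ z, q x z * g 1 z * Set.indicator A (fun _ => (1:ℝ)) z ∂μ := by
  unfold Numer
  rw [integral_pi_succ _ (integrable_ind_mul_prodFn hσm hq hql hqu hgm hg0 hgi x 0 A hA)]
  congr 1
  ext z
  have : ∀ ys : Fin 0 → X,
      Set.indicator A (fun _ => (1:ℝ)) ((Fin.cons z ys : Fin 1 → X) (Fin.last 0))
        * prodFn q g x 1 (Fin.cons z ys)
      = q x z * g 1 z * Set.indicator A (fun _ => (1:ℝ)) z := by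
    intro ys
    rw [show (Fin.last 0) = (0 : Fin 1) from rfl, Fin.cons_zero, prodFn_cons]
    have : prodFn q (fun k => g (k+1)) z 0 ys = 1 := by unfold prodFn; simp
    rw [this]
    ring
  rw [integral_congr_ae (Filter.Eventually.of_forall this)]
  simp

lemma Nseq'_one (hσm : 0 < σm) (hq : Measurable (Function.uncurry q))
    (hql : ∀ x x', σm ≤ q x x') (hqu : ∀ x x', q x x' ≤ σp)
    (hgm : ∀ k, 1 ≤ k → Measurable (g k)) (hg0 : ∀ k, 1 ≤ k → ∀ x, 0 ≤ g k x)
    (hgi : ∀ k, 1 ≤ k → Integrable (g k) μ) (x : X) :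
    Nseq' μ q g x 1 = ∫ z, q x z * g 1 z ∂μ := by
  rw [Nseq'_succ hσm hq hql hqu hgm hg0 hgi x 0]
  congr 1
  ext z
  rw [Nseq'_zero, mul_one]

end Aux3
section Key

variable {X : Type*} [MeasurableSpace X] {μ : Measure X} [IsProbabilityMeasure μ] {σm σp : ℝ}

lemma key_avg {w a a' h : X → ℝ} {m M : ℝ}
    (hσm : 0 < σm) (hσ : σm ≤ σp)
    (hw : Measurable w) (hw0 : ∀ z, 0 ≤ w z) (hwi : Integrable w μ)
    (hW : 0 < ∫ z, w z ∂μ)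
    (ha : Measurable a) (hal : ∀ z, σm ≤ a z) (hau : ∀ z, a z ≤ σp)
    (ha' : Measurable a') (hal' : ∀ z, σm ≤ a' z) (hau' : ∀ z, a' z ≤ σp)
    (hh : Measurable h) (hm : ∀ z, m ≤ h z) (hM : ∀ z, h z ≤ M) :
    |(∫ z, a z * w z * h z ∂μ) / (∫ z, a z * w z ∂μ)
      - (∫ z, a' z * w z * h z ∂μ) / (∫ z, a' z * w z ∂μ)|
      ≤ (1 - σm / σp) * (M - m) := by
  have hσp : 0 < σp := lt_of_lt_of_le hσm hσ
  set W := ∫ z, w z ∂μ with hWdef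
  set C := max |m| |M| with hCdef
  have hC0 : 0 ≤ C := le_trans (abs_nonneg m) (le_max_left _ _)
  have hhC : ∀ z, |h z| ≤ C := fun z => abs_le_max_abs_abs (hm z) (hM z)
  -- integrability
  have haw_i : ∀ (b : X → ℝ), Measurable b → (∀ z, σm ≤ b z) → (∀ z, b z ≤ σp) →
      Integrable (fun z => b z * w z) μ := by
    intro b hb hbl hbu
    apply Integrable.mono' (hwi.const_mul σp) ((hb.mul hw).aestronglyMeasurable)
    filter_upwards with z
    rw [Real.norm_eq_abs, Pi.mul_apply, abs_of_nonneg (mul_nonneg (le_trans hσm.le (hbl z)) (hw0 z))]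
    exact mul_le_mul_of_nonneg_right (hbu z) (hw0 z)
  have hwh_i : Integrable (fun z => w z * h z) μ := by
    apply Integrable.mono' (hwi.const_mul C) ((hw.mul hh).aestronglyMeasurable)
    filter_upwards with z
    rw [Real.norm_eq_abs, Pi.mul_apply, abs_mul, abs_of_nonneg (hw0 z)]
    calc w z * |h z| ≤ w z * C := mul_le_mul_of_nonneg_left (hhC z) (hw0 z)
      _ = C * w z := mul_comm _ _
  have hawh_i : ∀ (b : X → ℝ), Measurable b → (∀ z, σm ≤ b z) → (∀ z, b z ≤ σp) →
      Integrable (fun z => b z * w z * h z) μ := by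
    intro b hb hbl hbu
    apply Integrable.mono' (hwi.const_mul (σp * C)) (((hb.mul hw).mul hh).aestronglyMeasurable)
    filter_upwards with z
    rw [Real.norm_eq_abs, Pi.mul_apply, Pi.mul_apply, abs_mul, abs_mul, abs_of_nonneg (hw0 z),
      abs_of_nonneg (le_trans hσm.le (hbl z))]
    calc b z * w z * |h z| ≤ (σp * w z) * C :=
          mul_le_mul (mul_le_mul_of_nonneg_right (hbu z) (hw0 z)) (hhC z) (abs_nonneg _)
            (mul_nonneg hσp.le (hw0 z))
      _ = σp * C * w z := by ring
  -- denominator bounds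
  have hBl : ∀ (b : X → ℝ), Measurable b → (∀ z, σm ≤ b z) → (∀ z, b z ≤ σp) →
      σm * W ≤ ∫ z, b z * w z ∂μ := by
    intro b hb hbl hbu
    calc σm * W = ∫ z, σm * w z ∂μ := (integral_const_mul σm w).symm
      _ ≤ _ := integral_mono (hwi.const_mul σm) (haw_i b hb hbl hbu)
          (fun z => mul_le_mul_of_nonneg_right (hbl z) (hw0 z))
  have hBu : ∀ (b : X → ℝ), Measurable b → (∀ z, σm ≤ b z) → (∀ z, b z ≤ σp) →
      (∫ z, b z * w z ∂μ) ≤ σp * W := by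
    intro b hb hbl hbu
    calc (∫ z, b z * w z ∂μ) ≤ ∫ z, σp * w z ∂μ := integral_mono (haw_i b hb hbl hbu)
          (hwi.const_mul σp) (fun z => mul_le_mul_of_nonneg_right (hbu z) (hw0 z))
      _ = σp * W := integral_const_mul σp w
  -- main decomposition
  have main : ∀ (b : X → ℝ), Measurable b → (∀ z, σm ≤ b z) → (∀ z, b z ≤ σp) →
      (∫ z, b z * w z * h z ∂μ) / (∫ z, b z * w z ∂μ)
        = (∫ z, (b z * w z - (σm * (∫ z, b z * w z ∂μ) / (σp * W)) * w z) * h z ∂μ)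
            / (∫ z, b z * w z ∂μ)
          + σm * (∫ z, w z * h z ∂μ) / (σp * W) := by
    intro b hb hbl hbu
    have hBb0 : 0 < ∫ z, b z * w z ∂μ := lt_of_lt_of_le (by positivity) (hBl b hb hbl hbu)
    set c := σm * (∫ z, b z * w z ∂μ) / (σp * W) with hcdef
    have e1 : (fun z => (b z * w z - c * w z) * h z)
        = fun z => b z * w z * h z - c * (w z * h z) := funext fun z => by ring
    rw [e1, integral_sub (hawh_i b hb hbl hbu) (hwh_i.const_mul c), integral_const_mul, hcdef]
    field_simp
    ring
  have bnd : ∀ (b : X → ℝ), Measurable b → (∀ z, σm ≤ b z) → (∀ z, b z ≤ σp) →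
      (1 - σm / σp) * m ≤ (∫ z, (b z * w z - (σm * (∫ z, b z * w z ∂μ) / (σp * W)) * w z) * h z ∂μ)
            / (∫ z, b z * w z ∂μ)
        ∧ (∫ z, (b z * w z - (σm * (∫ z, b z * w z ∂μ) / (σp * W)) * w z) * h z ∂μ)
            / (∫ z, b z * w z ∂μ) ≤ (1 - σm / σp) * M := by
    intro b hb hbl hbu
    have hBb0 : 0 < ∫ z, b z * w z ∂μ := lt_of_lt_of_le (by positivity) (hBl b hb hbl hbu)
    have hBbu : (∫ z, b z * w z ∂μ) ≤ σp * W := hBu b hb hbl hbu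
    set Bb := ∫ z, b z * w z ∂μ with hBbdef
    set c := σm * Bb / (σp * W) with hcdef
    have hc0 : 0 ≤ c := by positivity
    have hc_le : c ≤ σm := by
      rw [hcdef, div_le_iff₀ (by positivity)]
      nlinarith
    have hu0 : ∀ z, 0 ≤ b z * w z - c * w z := by
      intro z
      have h1 := hbl z
      have h2 := hw0 z
      nlinarith
    have hu_i : Integrable (fun z => b z * w z - c * w z) μ :=
      (haw_i b hb hbl hbu).sub (hwi.const_mul c)
    have hIu : ∫ z, (b z * w z - c * w z) ∂μ = (1 - σm / σp) * Bb := by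
      rw [integral_sub (haw_i b hb hbl hbu) (hwi.const_mul c), integral_const_mul, ← hBbdef,
        ← hWdef, hcdef]
      field_simp
    have huh_i : Integrable (fun z => (b z * w z - c * w z) * h z) μ := by
      have e1 : (fun z => (b z * w z - c * w z) * h z)
          = fun z => b z * w z * h z - c * (w z * h z) := funext fun z => by ring
      rw [e1]
      exact (hawh_i b hb hbl hbu).sub (hwh_i.const_mul c)
    have h1 : ∫ z, (b z * w z - c * w z) * h z ∂μ ≤ (1 - σm / σp) * Bb * M := by
      have step : ∫ z, (b z * w z - c * w z) * h z ∂μ ≤ ∫ z, (b z * w z - c * w z) * M ∂μ :=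
        integral_mono huh_i (hu_i.mul_const M)
          (fun z => mul_le_mul_of_nonneg_left (hM z) (hu0 z))
      rwa [integral_mul_const, hIu] at step
    have h2 : (1 - σm / σp) * Bb * m ≤ ∫ z, (b z * w z - c * w z) * h z ∂μ := by
      have step : (∫ z, (b z * w z - c * w z) * m ∂μ) ≤ ∫ z, (b z * w z - c * w z) * h z ∂μ :=
        integral_mono (hu_i.mul_const m) huh_i
          (fun z => mul_le_mul_of_nonneg_left (hm z) (hu0 z))
      rwa [integral_mul_const, hIu] at step
    constructor
    · rw [le_div_iff₀ hBb0]
      nlinarith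
    · rw [div_le_iff₀ hBb0]
      nlinarith
  rw [main a ha hal hau, main a' ha' hal' hau']
  obtain ⟨l1, u1⟩ := bnd a ha hal hau
  obtain ⟨l2, u2⟩ := bnd a' ha' hal' hau'
  have expand : (1 - σm / σp) * (M - m) = (1 - σm / σp) * M - (1 - σm / σp) * m := by ring
  rw [abs_le]
  constructor <;> [linarith; linarith]

end Key
section Main

variable {X : Type*} [MeasurableSpace X] {μ : Measure X} [IsProbabilityMeasure μ]
  {σm σp : ℝ} {q : X → X → ℝ} {g : ℕ → X → ℝ}

lemma nonempty_of_prob (μ : Measure X) [IsProbabilityMeasure μ] : Nonempty X := by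
  rcases isEmpty_or_nonempty X with hX | hX
  · exfalso
    have h1 : μ Set.univ = 1 := measure_univ
    rw [show (Set.univ : Set X) = ∅ from Set.univ_eq_empty_iff.mpr hX, measure_empty] at h1
    exact zero_ne_one h1
  · exact hX

lemma measurable_Nseq' (hq : Measurable (Function.uncurry q))
    (hgm : ∀ k, 1 ≤ k → Measurable (g k)) (n : ℕ) :
    Measurable (fun z => Nseq' μ q g z n) := by
  have hf : StronglyMeasurable (fun p : X × (Fin n → X) => prodFn q g p.1 n p.2) :=
    (measurable_prodFn_param hq hgm n).stronglyMeasurable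
  exact (StronglyMeasurable.integral_prod_right' (ν := Measure.pi fun _ : Fin n => μ)
    hf).measurable

lemma measurable_Numer (hq : Measurable (Function.uncurry q))
    (hgm : ∀ k, 1 ≤ k → Measurable (g k)) (n : ℕ) (A : Set X) (hA : MeasurableSet A) :
    Measurable (fun z => Numer μ q g z n A) := by
  have hf : StronglyMeasurable (fun p : X × (Fin (n+1) → X) =>
      Set.indicator A (fun _ => (1:ℝ)) (p.2 (Fin.last n)) * prodFn q g p.1 (n+1) p.2) := by
    apply Measurable.stronglyMeasurable
    exact ((measurable_const.indicator hA).comp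
      ((measurable_pi_apply _).comp measurable_snd)).mul (measurable_prodFn_param hq hgm (n+1))
  exact (StronglyMeasurable.integral_prod_right' (ν := Measure.pi fun _ : Fin (n+1) => μ)
    hf).measurable

lemma phiSet_eq (x : X) (n : ℕ) (A : Set X) :
    phiSet μ q g x n A = Numer μ q g x n A / Nseq' μ q g x (n+1) := rfl

theorem main_aux (hσm : 0 < σm) (hσ : σm ≤ σp) (hq : Measurable (Function.uncurry q))
    (hql : ∀ x x', σm ≤ q x x') (hqu : ∀ x x', q x x' ≤ σp) :
    ∀ (n : ℕ) (g : ℕ → X → ℝ), (∀ k, 1 ≤ k → Measurable (g k)) →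
      (∀ k, 1 ≤ k → ∀ x, 0 ≤ g k x) → (∀ k, 1 ≤ k → Integrable (g k) μ) →
      (∀ k, 1 ≤ k → 0 < ∫ x, g k x ∂μ) →
      ∀ (x x' : X) (A : Set X), MeasurableSet A →
      |phiSet μ q g x n A - phiSet μ q g x' n A| ≤ (1 - σm / σp) ^ (n + 1) := by
  have hσp : 0 < σp := lt_of_lt_of_le hσm hσ
  intro n
  induction n with
  | zero =>
    intro g hgm hg0 hgi hgpos x x' A hA
    rw [phiSet_eq, phiSet_eq, Numer_zero_eq hσm hq hql hqu hgm hg0 hgi x A hA,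
      Numer_zero_eq hσm hq hql hqu hgm hg0 hgi x' A hA,
      Nseq'_one hσm hq hql hqu hgm hg0 hgi x, Nseq'_one hσm hq hql hqu hgm hg0 hgi x']
    have key := key_avg (μ := μ) (w := g 1) (a := fun z => q x z) (a' := fun z => q x' z)
      (h := Set.indicator A fun _ => (1:ℝ)) (m := 0) (M := 1) hσm hσ
      (hgm 1 le_rfl) (hg0 1 le_rfl) (hgi 1 le_rfl) (hgpos 1 le_rfl)
      (hq.comp (measurable_const.prodMk measurable_id)) (fun z => hql x z) (fun z => hqu x z)
      (hq.comp (measurable_const.prodMk measurable_id)) (fun z => hql x' z) (fun z => hqu x' z)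
      (measurable_const.indicator hA) (fun z => Set.indicator_nonneg (by simp) _)
      (fun z => (Set.indicator_le_self' (by simp) _).trans (by simp))
    simpa using key
  | succ n IH =>
    intro g hgm hg0 hgi hgpos x x' A hA
    set g' : ℕ → X → ℝ := fun k => g (k+1) with hg'def
    have hgm' : ∀ k, 1 ≤ k → Measurable (g' k) := fun k hk => hgm (k+1) (by omega)
    have hg0' : ∀ k, 1 ≤ k → ∀ y, 0 ≤ g' k y := fun k hk => hg0 (k+1) (by omega)
    have hgi' : ∀ k, 1 ≤ k → Integrable (g' k) μ := fun k hk => hgi (k+1) (by omega)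
    have hgpos' : ∀ k, 1 ≤ k → 0 < ∫ y, g' k y ∂μ := fun k hk => hgpos (k+1) (by omega)
    set Gd : X → ℝ := fun z => Nseq' μ q g' z (n+1) with hGddef
    set Nu : X → ℝ := fun z => Numer μ q g' z n A with hNudef
    have hGpos : ∀ z, 0 < Gd z := fun z =>
      Nseq'_pos hσm hq hql hqu hgm' hg0' hgi' hgpos' z (n+1)
    have hGle : ∀ z, Gd z ≤ ∏ k : Fin (n+1), (σp * ∫ y, g' ((k : ℕ) + 1) y ∂μ) := fun z =>
      Nseq'_le hσm hq hql hqu hgm' hg0' hgi' z (n+1)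
    have hGge : ∀ z, (∏ k : Fin (n+1), (σm * ∫ y, g' ((k : ℕ) + 1) y ∂μ)) ≤ Gd z := fun z =>
      Nseq'_ge hσm hq hql hqu hgm' hg0' hgi' z (n+1)
    have hNu0 : ∀ z, 0 ≤ Nu z := fun z => Numer_nonneg hσm hql hg0' z n A
    have hNule : ∀ z, Nu z ≤ Gd z := fun z =>
      Numer_le_Nseq' hσm hq hql hqu hgm' hg0' hgi' z n A hA
    set h : X → ℝ := fun z => Nu z / Gd z with hhdef
    have hphirfl : ∀ z, phiSet μ q g' z n A = h z := fun z => rfl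
    have hh01 : ∀ z, 0 ≤ h z ∧ h z ≤ 1 := by
      intro z
      constructor
      · exact div_nonneg (hNu0 z) (hGpos z).le
      · rw [hhdef, div_le_one (hGpos z)]
        exact hNule z
    have hne : Nonempty X := nonempty_of_prob μ
    set m := sInf (Set.range h) with hmdef
    set M := sSup (Set.range h) with hMdef
    have hbdd_below : BddBelow (Set.range h) := by
      refine ⟨0, ?_⟩
      rintro y ⟨z, rfl⟩
      exact (hh01 z).1
    have hbdd_above : BddAbove (Set.range h) := by
      refine ⟨1, ?_⟩
      rintro y ⟨z, rfl⟩
      exact (hh01 z).2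
    have hrange_ne : (Set.range h).Nonempty := Set.range_nonempty h
    have hm : ∀ z, m ≤ h z := fun z => csInf_le hbdd_below ⟨z, rfl⟩
    have hM : ∀ z, h z ≤ M := fun z => le_csSup hbdd_above ⟨z, rfl⟩
    have hIH : ∀ z z', |h z - h z'| ≤ (1 - σm / σp) ^ (n + 1) := by
      intro z z'
      rw [← hphirfl z, ← hphirfl z']
      exact IH g' hgm' hg0' hgi' hgpos' z z' A hA
    have hMm : M - m ≤ (1 - σm / σp) ^ (n + 1) := by
      have hstep : ∀ z, h z ≤ m + (1 - σm / σp) ^ (n + 1) := by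
        intro z
        have hlow : h z - (1 - σm / σp) ^ (n + 1) ≤ m := by
          apply le_csInf hrange_ne
          rintro y ⟨z', rfl⟩
          have := hIH z z'
          rw [abs_le] at this
          linarith [this.1]
        linarith
      have : M ≤ m + (1 - σm / σp) ^ (n + 1) := by
        apply csSup_le hrange_ne
        rintro y ⟨z, rfl⟩
        exact hstep z
      linarith
    -- measurability
    have hGmeas : Measurable Gd := measurable_Nseq' hq hgm' (n+1)
    have hNmeas : Measurable Nu := measurable_Numer hq hgm' n A hA
    have hhmeas : Measurable h := hNmeas.div hGmeas
    -- the weight function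
    set w : X → ℝ := fun z => g 1 z * Gd z with hwdef
    have hwmeas : Measurable w := (hgm 1 le_rfl).mul hGmeas
    have hw0 : ∀ z, 0 ≤ w z := fun z =>
      mul_nonneg (hg0 1 le_rfl z) (hGpos z).le
    set Cg := ∏ k : Fin (n+1), (σp * ∫ y, g' ((k : ℕ) + 1) y ∂μ) with hCgdef
    set cg := ∏ k : Fin (n+1), (σm * ∫ y, g' ((k : ℕ) + 1) y ∂μ) with hcgdef
    have hcg0 : 0 < cg :=
      Finset.prod_pos fun k _ => mul_pos hσm (hgpos' _ (by omega))
    have hwi : Integrable w μ := by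
      apply Integrable.mono' ((hgi 1 le_rfl).const_mul Cg) hwmeas.aestronglyMeasurable
      filter_upwards with z
      rw [Real.norm_eq_abs, abs_of_nonneg (hw0 z), hwdef]
      calc g 1 z * Gd z ≤ g 1 z * Cg :=
            mul_le_mul_of_nonneg_left (hGle z) (hg0 1 le_rfl z)
        _ = Cg * g 1 z := mul_comm _ _
    have hW : 0 < ∫ z, w z ∂μ := by
      have hlow : ∫ z, cg * g 1 z ∂μ ≤ ∫ z, w z ∂μ := by
        apply integral_mono ((hgi 1 le_rfl).const_mul cg) hwi
        intro z
        calc cg * g 1 z = g 1 z * cg := mul_comm _ _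
          _ ≤ g 1 z * Gd z := mul_le_mul_of_nonneg_left (hGge z) (hg0 1 le_rfl z)
      have : (0:ℝ) < cg * ∫ z, g 1 z ∂μ := mul_pos hcg0 (hgpos 1 le_rfl)
      rw [← integral_const_mul] at this
      linarith
    -- apply key lemma
    have key := key_avg (μ := μ) (w := w) (a := fun z => q x z) (a' := fun z => q x' z)
      (h := h) (m := m) (M := M) hσm hσ hwmeas hw0 hwi hW
      (hq.comp (measurable_const.prodMk measurable_id)) (fun z => hql x z) (fun z => hqu x z)
      (hq.comp (measurable_const.prodMk measurable_id)) (fun z => hql x' z) (fun z => hqu x' z)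
      hhmeas hm hM
    -- convert integrals
    have econv : ∀ y : X, (fun z => q y z * w z * h z) = fun z => q y z * g 1 z * Nu z := by
      intro y
      funext z
      rw [hwdef, hhdef]
      field_simp [(hGpos z).ne']
    have econv2 : ∀ y : X, (fun z => q y z * w z) = fun z => q y z * g 1 z * Gd z := by
      intro y
      funext z
      rw [hwdef]
      ring
    rw [econv x, econv x', econv2 x, econv2 x'] at key
    rw [phiSet_eq, phiSet_eq,
      Numer_succ hσm hq hql hqu hgm hg0 hgi x n A hA,
      Numer_succ hσm hq hql hqu hgm hg0 hgi x' n A hA,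
      Nseq'_succ hσm hq hql hqu hgm hg0 hgi x (n+1),
      Nseq'_succ hσm hq hql hqu hgm hg0 hgi x' (n+1)]
    calc |(∫ z, q x z * g 1 z * Nu z ∂μ) / (∫ z, q x z * g 1 z * Gd z ∂μ)
          - (∫ z, q x' z * g 1 z * Nu z ∂μ) / (∫ z, q x' z * g 1 z * Gd z ∂μ)|
        ≤ (1 - σm / σp) * (M - m) := key
      _ ≤ (1 - σm / σp) * (1 - σm / σp) ^ (n + 1) := by
          apply mul_le_mul_of_nonneg_left hMm
          have : σm / σp ≤ 1 := div_le_one_of_le₀ hσ hσp.le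
          linarith
      _ = (1 - σm / σp) ^ (n + 1 + 1) := by ring

end Main

/-- explicit form of Corollary 1. For every `n ≥ 1` (here
written as `n + 1` with `n : ℕ`) and all initial points `x, x′`, the filtering
distributions satisfy `‖φₙˣ − φₙˣ′‖_TV ≤ ρⁿ` with `ρ = 1 − σ₋/σ₊`; equivalently,
`|φₙˣ(A) − φₙˣ′(A)| ≤ ρⁿ` for every measurable set `A`. -/
theorem filtering_forgets_initial_condition
    {X : Type*} [MeasurableSpace X] (μ : Measure X) [IsProbabilityMeasure μ]
    (σm σp : ℝ) (hσm : 0 < σm) (hσ : σm ≤ σp)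
    (q : X → X → ℝ) (hq : Measurable (Function.uncurry q))
    (hql : ∀ x x', σm ≤ q x x') (hqu : ∀ x x', q x x' ≤ σp)
    (g : ℕ → X → ℝ) (hgm : ∀ k, 1 ≤ k → Measurable (g k))
    (hg0 : ∀ k, 1 ≤ k → ∀ x, 0 ≤ g k x)
    (hgi : ∀ k, 1 ≤ k → Integrable (g k) μ)
    (hgpos : ∀ k, 1 ≤ k → 0 < ∫ x, g k x ∂μ)
    (n : ℕ) (x x' : X) (A : Set X) (hA : MeasurableSet A) :
    |phiSet μ q g x n A - phiSet μ q g x' n A| ≤ (1 - σm / σp) ^ (n + 1) := by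
  have := main_aux (μ := μ) hσm hσ hq hql hqu n g hgm hg0 hgi hgpos x x' A hA
  exact this
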